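/- For n ≥ 3, the cocktail party graph CP(n) = K_{2n} minus a perfect matching has strong domination number 2, and for any vertex v, the graph CP(n) − v has strong domination number 1; hence st_{γ_st}(CP(n)) = 1. -/

import Mathlib

open SimpleGraph

/-- `D` is a strong dominating set of `G`: every vertex outside `D` has a neighbor
in `D` whose degree is at least its own. -/
def IsStrongDominating {V : Type*} (G : SimpleGraph V) (D : Set V) : Prop :=
  ∀ v ∉ D, ∃ u ∈ D, G.Adj v u ∧ (G.neighborSet v).ncard ≤ (G.neighborSet u).ncard

/-- The strong domination number. -/
noncomputable def gammaSt {V : Type*} (G : SimpleGraph V) : ℕ :=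
  sInf {n | ∃ D : Set V, D.Finite ∧ IsStrongDominating G D ∧ D.ncard = n}

/-- The stability of the strong domination number: the minimum size of a vertex set
whose removal changes the strong domination number. -/
noncomputable def stGammaSt {V : Type*} (G : SimpleGraph V) : ℕ :=
  sInf {n | ∃ S : Set V, S.Finite ∧ S.ncard = n ∧ gammaSt (G.induce Sᶜ) ≠ gammaSt G}

/-- The join of two graphs. -/
def joinG {V W : Type*} (G : SimpleGraph V) (H : SimpleGraph W) : SimpleGraph (V ⊕ W) :=
  SimpleGraph.fromRel (fun x y =>
    match x, y with
    | Sum.inl a, Sum.inl b => G.Adj a b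
    | Sum.inr a, Sum.inr b => H.Adj a b
    | _, _ => True)

/-- `n` disjoint copies of `K₂`. -/
def nK2 (n : ℕ) : SimpleGraph (Fin n × Fin 2) where
  Adj x y := x.1 = y.1 ∧ x.2 ≠ y.2
  symm := ⟨fun x y h => ⟨h.1.symm, h.2.symm⟩⟩
  loopless := ⟨fun x h => h.2 rfl⟩

/- ### Auxiliary lemmas -/

lemma image_neighborSet_iso {V W : Type*} {G : SimpleGraph V} {H : SimpleGraph W}
    (e : G ≃g H) (v : V) : ⇑e '' G.neighborSet v = H.neighborSet (e v) := by
  ext w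
  constructor
  · rintro ⟨x, hx, rfl⟩
    exact e.map_adj_iff.mpr hx
  · intro hw
    refine ⟨e.symm w, ?_, e.apply_symm_apply w⟩
    have : H.Adj (e v) (e (e.symm w)) := by rwa [e.apply_symm_apply]
    exact e.map_adj_iff.mp this

lemma isStrongDominating_image {V W : Type*} {G : SimpleGraph V} {H : SimpleGraph W}
    (e : G ≃g H) {D : Set V} (hD : IsStrongDominating G D) :
    IsStrongDominating H (⇑e '' D) := by
  intro w hw
  have hv : e.symm w ∉ D := by
    intro h
    exact hw ⟨e.symm w, h, e.apply_symm_apply w⟩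
  obtain ⟨u, hu, hadj, hcard⟩ := hD (e.symm w) hv
  refine ⟨e u, ⟨u, hu, rfl⟩, ?_, ?_⟩
  · have := e.map_adj_iff.mpr hadj
    rwa [e.apply_symm_apply] at this
  · have h1 : (H.neighborSet w).ncard = (G.neighborSet (e.symm w)).ncard := by
      have h := image_neighborSet_iso e (e.symm w)
      rw [e.apply_symm_apply] at h
      rw [← h, Set.ncard_image_of_injective _ e.injective]
    have h2 : (H.neighborSet (e u)).ncard = (G.neighborSet u).ncard := by
      rw [← image_neighborSet_iso e u, Set.ncard_image_of_injective _ e.injective]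
    omega

lemma gammaSt_iso {V W : Type*} {G : SimpleGraph V} {H : SimpleGraph W} (e : G ≃g H) :
    gammaSt G = gammaSt H := by
  unfold gammaSt
  congr 1
  ext m
  constructor
  · rintro ⟨D, hfin, hdom, rfl⟩
    exact ⟨⇑e '' D, hfin.image _, isStrongDominating_image e hdom,
      Set.ncard_image_of_injective _ e.injective⟩
  · rintro ⟨D, hfin, hdom, rfl⟩
    exact ⟨⇑e.symm '' D, hfin.image _, isStrongDominating_image e.symm hdom,
      Set.ncard_image_of_injective _ e.symm.injective⟩

lemma fin2_cases (a b : Fin 2) : a = b ∨ a = b + 1 := by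
  revert a b; decide

lemma fin2_add_one_ne (a : Fin 2) : a + 1 ≠ a := by
  revert a; decide

lemma sigma_fst_eq (n : ℕ) (y p : Σ _ : Fin n, Fin 2) (h : y.1 = p.1) :
    y = p ∨ y = ⟨p.1, p.2 + 1⟩ := by
  obtain ⟨yi, ya⟩ := y
  obtain ⟨pi, pa⟩ := p
  simp only at h
  subst h
  rcases fin2_cases ya pa with h2 | h2 <;> subst h2
  · exact Or.inl rfl
  · exact Or.inr rfl

lemma sigma_partner_ne (n : ℕ) (p : Σ _ : Fin n, Fin 2) :
    (⟨p.1, p.2 + 1⟩ : Σ _ : Fin n, Fin 2) ≠ p := by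
  obtain ⟨pi, pa⟩ := p
  intro h
  have h2 := congrArg (fun z : (Σ _ : Fin n, Fin 2) => z.2) h
  simp only at h2
  exact fin2_add_one_ne pa h2

lemma cp_ncard_nbhd (n : ℕ) (x : (Σ _ : Fin n, Fin 2)) :
    ((completeMultipartiteGraph (fun _ : Fin n => Fin 2)).neighborSet x).ncard = 2 * n - 2 := by
  have hset : (completeMultipartiteGraph (fun _ : Fin n => Fin 2)).neighborSet x
      = ({⟨x.1, x.2⟩, ⟨x.1, x.2 + 1⟩} : Set (Σ _ : Fin n, Fin 2))ᶜ := by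
    ext y
    simp only [mem_neighborSet, comap_adj, top_adj, Set.mem_compl_iff, Set.mem_insert_iff,
      Set.mem_singleton_iff]
    constructor
    · intro h hmem
      rcases hmem with h' | h' <;> exact h (by rw [h'])
    · intro h hxy
      rcases sigma_fst_eq n y ⟨x.1, x.2⟩ hxy.symm with h2 | h2
      · exact h (Or.inl h2)
      · exact h (Or.inr h2)
  have hpair : ({⟨x.1, x.2⟩, ⟨x.1, x.2 + 1⟩} : Set (Σ _ : Fin n, Fin 2)).ncard = 2 :=
    Set.ncard_pair (sigma_partner_ne n ⟨x.1, x.2⟩).symm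
  have hcard : Nat.card (Σ _ : Fin n, Fin 2) = 2 * n := by
    simp [Nat.card_eq_fintype_card, Fintype.card_sigma, Nat.mul_comm]
  have := Set.ncard_add_ncard_compl ({⟨x.1, x.2⟩, ⟨x.1, x.2 + 1⟩} : Set (Σ _ : Fin n, Fin 2))
  rw [hset]
  omega

lemma ncard_compl_singleton' {V : Type*} [Finite V] (x : V) :
    ({x}ᶜ : Set V).ncard = Nat.card V - 1 := by
  have := Set.ncard_add_ncard_compl ({x} : Set V)
  rw [Set.ncard_singleton] at this
  omega

theorem stGammaSt_cocktailParty (n : ℕ) (hn : 3 ≤ n) :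
    gammaSt (completeMultipartiteGraph (fun _ : Fin n => Fin 2)) = 2 ∧
    (∀ v, gammaSt ((completeMultipartiteGraph (fun _ : Fin n => Fin 2)).induce {v}ᶜ) = 1) ∧
    stGammaSt (completeMultipartiteGraph (fun _ : Fin n => Fin 2)) = 1 := by
  set G := completeMultipartiteGraph (fun _ : Fin n => Fin 2) with hG
  have hadj : ∀ x y : (Σ _ : Fin n, Fin 2), G.Adj x y ↔ x.1 ≠ y.1 := fun x y => by
    simp [hG]
  obtain ⟨i0⟩ : Nonempty (Fin n) := ⟨⟨0, by omega⟩⟩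
  -- Part 1 : gammaSt G = 2
  have h1 : gammaSt G = 2 := by
    have mem2 : 2 ∈ {m | ∃ D : Set (Σ _ : Fin n, Fin 2), D.Finite ∧ IsStrongDominating G D ∧
        D.ncard = m} := by
      refine ⟨{⟨i0, 0⟩, ⟨i0, (0 : Fin 2) + 1⟩}, Set.toFinite _, ?_,
        Set.ncard_pair (sigma_partner_ne n ⟨i0, 0⟩).symm⟩
      intro v hv
      have hva : v.1 ≠ i0 := by
        intro h
        rcases sigma_fst_eq n v ⟨i0, 0⟩ h with h2 | h2
        · exact hv (Or.inl h2)
        · exact hv (Or.inr h2)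
      exact ⟨⟨i0, 0⟩, Or.inl rfl, (hadj v ⟨i0, 0⟩).mpr hva,
        by rw [cp_ncard_nbhd, cp_ncard_nbhd]⟩
    have lower : ∀ m ∈ {m | ∃ D : Set (Σ _ : Fin n, Fin 2), D.Finite ∧ IsStrongDominating G D ∧
        D.ncard = m}, 2 ≤ m := by
      rintro m ⟨D, hfin, hdom, rfl⟩
      by_contra h
      push_neg at h
      have hsub : ∀ x ∈ D, ∀ y ∈ D, x = y := (Set.ncard_le_one hfin).mp (by omega)
      rcases D.eq_empty_or_nonempty with rfl | ⟨d, hd⟩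
      · obtain ⟨u, hu, -⟩ := hdom ⟨i0, 0⟩ (by simp)
        exact hu
      · have hd' : (⟨d.1, d.2 + 1⟩ : Σ _ : Fin n, Fin 2) ∉ D := by
          intro hmem
          exact sigma_partner_ne n d (hsub _ hmem _ hd)
        obtain ⟨u, hu, huadj, -⟩ := hdom _ hd'
        have : u = d := hsub _ hu _ hd
        subst this
        exact (hadj _ u).mp huadj rfl
    exact le_antisymm (Nat.sInf_le mem2) (le_csInf ⟨2, mem2⟩ lower)
  -- Part 2 : deleting any vertex gives gammaSt = 1
  have h2 : ∀ v, gammaSt (G.induce {v}ᶜ) = 1 := by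
    intro v
    set H := G.induce {v}ᶜ with hH
    have hvmem : (⟨v.1, v.2 + 1⟩ : Σ _ : Fin n, Fin 2) ∈ ({v}ᶜ : Set _) := by
      simp only [Set.mem_compl_iff, Set.mem_singleton_iff]
      exact sigma_partner_ne n v
    set u : ↥({v}ᶜ : Set (Σ _ : Fin n, Fin 2)) := ⟨⟨v.1, v.2 + 1⟩, hvmem⟩ with hu
    -- every vertex different from u is adjacent to u
    have hadjU : ∀ w : ↥({v}ᶜ : Set (Σ _ : Fin n, Fin 2)), w ≠ u → H.Adj w u := by
      intro w hw
      have hne : (w : Σ _ : Fin n, Fin 2).1 ≠ v.1 := by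
        intro h
        rcases sigma_fst_eq n (↑w) v h with h2 | h2
        · exact w.2 h2
        · exact hw (Subtype.ext h2)
      show G.Adj _ _
      exact (hadj _ _).mpr hne
    have hNu : H.neighborSet u = {u}ᶜ := by
      ext w
      simp only [mem_neighborSet, Set.mem_compl_iff, Set.mem_singleton_iff]
      constructor
      · intro h heq
        exact H.loopless.irrefl u (heq ▸ h)
      · intro h
        exact (hadjU w h).symm
    have mem1 : 1 ∈ {m | ∃ D : Set ↥({v}ᶜ : Set (Σ _ : Fin n, Fin 2)), D.Finite ∧
        IsStrongDominating H D ∧ D.ncard = m} := by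
      refine ⟨{u}, Set.toFinite _, ?_, Set.ncard_singleton u⟩
      intro w hw
      refine ⟨u, rfl, hadjU w (by simpa using hw), ?_⟩
      have hsub : H.neighborSet w ⊆ ({w}ᶜ : Set _) := by
        intro y hy
        simp only [Set.mem_compl_iff, Set.mem_singleton_iff]
        rintro rfl
        exact H.loopless.irrefl y hy
      calc (H.neighborSet w).ncard ≤ ({w}ᶜ : Set _).ncard :=
            Set.ncard_le_ncard hsub (Set.toFinite _)
        _ = ({u}ᶜ : Set _).ncard := by rw [ncard_compl_singleton', ncard_compl_singleton']
        _ = (H.neighborSet u).ncard := by rw [hNu]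
    have lower : ∀ m ∈ {m | ∃ D : Set ↥({v}ᶜ : Set (Σ _ : Fin n, Fin 2)), D.Finite ∧
        IsStrongDominating H D ∧ D.ncard = m}, 1 ≤ m := by
      rintro m ⟨D, hfin, hdom, rfl⟩
      by_contra h
      push_neg at h
      have hD : D = ∅ := (Set.ncard_eq_zero hfin).mp (by omega)
      subst hD
      obtain ⟨w, hw, -⟩ := hdom u (by simp)
      exact hw
    exact le_antisymm (Nat.sInf_le mem1) (le_csInf ⟨1, mem1⟩ lower)
  refine ⟨h1, h2, ?_⟩
  -- Part 3 : stGammaSt = 1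
  have mem1 : 1 ∈ {m | ∃ S : Set (Σ _ : Fin n, Fin 2), S.Finite ∧ S.ncard = m ∧
      gammaSt (G.induce Sᶜ) ≠ gammaSt G} := by
    refine ⟨{⟨i0, 0⟩}, Set.toFinite _, Set.ncard_singleton _, ?_⟩
    rw [h2 ⟨i0, 0⟩, h1]
    omega
  have lower : ∀ m ∈ {m | ∃ S : Set (Σ _ : Fin n, Fin 2), S.Finite ∧ S.ncard = m ∧
      gammaSt (G.induce Sᶜ) ≠ gammaSt G}, 1 ≤ m := by
    rintro m ⟨S, hfin, rfl, hne⟩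
    by_contra h
    push_neg at h
    have hS : S = ∅ := (Set.ncard_eq_zero hfin).mp (by omega)
    subst hS
    rw [Set.compl_empty] at hne
    exact hne (gammaSt_iso (induceUnivIso G))
  exact le_antisymm (Nat.sInf_le mem1) (le_csInf ⟨1, mem1⟩ lower)
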